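/- If B is a unital C*-algebra, ρ a faithful state on B, and ρ is a mixture of dispersion-free states of B, then B is abelian. -/
import Mathlib


open scoped ComplexOrder
open MeasureTheory

/-- If ρ is a faithful state on a unital C*-algebra B and ρ is a mixture of
dispersion-free (multiplicative) states of B, then B is abelian. -/
theorem stmt_6 {B : Type*} [NormedRing B] [StarRing B] [CStarRing B]
    [NormedAlgebra ℂ B] [StarModule ℂ B] [CompleteSpace B]
    (ρ : B →ₗ[ℂ] ℂ) (hρpos : ∀ b : B, 0 ≤ ρ (star b * b)) (hρone : ρ 1 = 1)
    (hfaithful : ∀ b : B, ρ (star b * b) = 0 → b = 0)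
    {Ω : Type*} [MeasurableSpace Ω] (μ : Measure Ω) [IsProbabilityMeasure μ]
    (ωs : Ω → B →ₗ[ℂ] ℂ)
    (hpos : ∀ s : Ω, ∀ b : B, 0 ≤ ωs s (star b * b))
    (hone : ∀ s : Ω, ωs s 1 = 1)
    (hmult : ∀ s : Ω, ∀ a b : B, ωs s (a * b) = ωs s a * ωs s b)
    (hmix : ∀ b : B, ρ b = ∫ s, ωs s b ∂μ) :
    ∀ a b : B, a * b = b * a := by
  intro a b
  have key : ∀ s : Ω, ωs s (star (a * b - b * a) * (a * b - b * a)) = 0 := by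
    intro s
    have hc : ωs s (a * b - b * a) = 0 := by
      rw [map_sub, hmult, hmult]; ring
    rw [hmult, hc, mul_zero]
  have h0 : ρ (star (a * b - b * a) * (a * b - b * a)) = 0 := by
    rw [hmix]
    simp only [key, integral_zero]
  have := hfaithful _ h0
  exact sub_eq_zero.mp this
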